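/- Let 0 < w ≤ n − s with s ≥ 1. There exists a family 𝓕 of subsets of an n-element set, each of cardinality n − s, such that every subset of cardinality w is contained in some member of 𝓕, and |𝓕| ≤ (C(n,w)/C(n−s,w)) · (1 + ln C(n−s,w)). -/

import Mathlib

open Finset

namespace CoveringGreedy

/-- The potential function bounding the greedy step count. -/
noncomputable def hb (q x : ℝ) : ℝ := if x ≤ q then x else q * Real.log (x / q) + q

lemma hb_mono {q : ℝ} (hq : 0 < q) {a b : ℝ} (ha : 0 ≤ a) (hab : a ≤ b) :
    hb q a ≤ hb q b := by
  unfold hb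
  split_ifs with h1 h2 h2
  · exact hab
  · push_neg at h2
    have hlog : (0:ℝ) ≤ Real.log (b / q) :=
      Real.log_nonneg (by rw [le_div_iff₀ hq]; linarith)
    nlinarith
  · linarith
  · push_neg at h1 h2
    have hap : 0 < a := lt_trans hq h1
    have : Real.log (a / q) ≤ Real.log (b / q) :=
      Real.log_le_log (by positivity) (by gcongr)
    nlinarith

lemma log_lb {t : ℝ} (ht : 0 < t) : 1 - 1 / t ≤ Real.log t := by
  simpa [one_div] using Real.one_sub_inv_le_log_of_pos ht

lemma hb_key {q u u' : ℝ} (hq : 1 < q) (hu : 1 ≤ u) (hu'0 : 0 ≤ u')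
    (h1 : u' ≤ u - 1) (h2 : u' ≤ u * (1 - 1 / q)) : 1 + hb q u' ≤ hb q u := by
  have hq0 : 0 < q := lt_trans one_pos hq
  by_cases hcase : u ≤ q
  · have hm : hb q u' ≤ hb q (u - 1) := hb_mono hq0 hu'0 h1
    have h3 : hb q (u - 1) = u - 1 := if_pos (by linarith)
    have h4 : hb q u = u := if_pos hcase
    rw [h4]; rw [h3] at hm; linarith
  · push_neg at hcase
    set v := u * (1 - 1 / q) with hv
    have hq1 : 0 < 1 - 1 / q := by
      have : 1 / q < 1 := by rw [div_lt_one hq0]; exact hq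
      linarith
    have hv0 : 0 ≤ v := by positivity
    have hmono : hb q u' ≤ hb q v := hb_mono hq0 hu'0 h2
    have hu_val : hb q u = q * Real.log (u / q) + q := if_neg (not_le.2 hcase)
    rw [hu_val]
    by_cases hvq : v ≤ q
    · have hv_val : hb q v = v := if_pos hvq
      rw [hv_val] at hmono
      set t := u / q with ht
      have ht1 : 1 < t := (one_lt_div hq0).2 hcase
      have ht0 : 0 < t := lt_trans one_pos ht1
      have htu : u = q * t := by rw [ht, mul_div_assoc']; exact (mul_div_cancel_left₀ u hq0.ne').symm
      have htb : t * (q - 1) ≤ q := by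
        have h0 : u * (1 - 1 / q) ≤ q := hvq
        have h' : u * (1 - 1 / q) = t * (q - 1) := by rw [htu]; field_simp
        linarith [h' ▸ h0]
      have hlog : 1 - 1 / t ≤ Real.log t := log_lb ht0
      -- goal: 1 + hb q u' ≤ q * log t + q ; have hb q u' ≤ v = u(1-1/q) = q t (1-1/q) = t(q-1)
      have hveq : v = t * (q - 1) := by rw [hv, htu]; field_simp
      have key : t * (q - 1) - (q - 1) ≤ q * Real.log t := by
        have hqt : (q - 1) * (t - 1) ≤ q * (1 - 1 / t) := by
          rw [show q * (1 - 1 / t) = q * (t - 1) / t by field_simp, le_div_iff₀ ht0]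
          nlinarith
        have := mul_le_mul_of_nonneg_left hlog hq0.le
        nlinarith
      rw [hveq] at hmono
      linarith
    · push_neg at hvq
      have hv_val : hb q v = q * Real.log (v / q) + q := if_neg (not_le.2 hvq)
      rw [hv_val] at hmono
      have hvpos : 0 < v := lt_trans hq0 hvq
      have hqm1 : (0:ℝ) < q - 1 := by linarith
      have hprod : v / q * (q / (q - 1)) = u / q := by
        rw [hv]; field_simp
      have hldiff : Real.log (u / q) = Real.log (v / q) + Real.log (q / (q - 1)) := by
        rw [← Real.log_mul (ne_of_gt (div_pos hvpos hq0))
          (ne_of_gt (div_pos hq0 hqm1)), hprod]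
      have hlq : 1 / q ≤ Real.log (q / (q - 1)) := by
        have h0 : (0:ℝ) < q / (q - 1) := by
          apply div_pos hq0; linarith
        have := log_lb h0
        have he : 1 - 1 / (q / (q - 1)) = 1 / q := by
          rw [one_div_div]; field_simp; ring
        rwa [he] at this
      have hmul := mul_le_mul_of_nonneg_left hlq hq0.le
      have hone : q * (1 / q) = 1 := by field_simp
      rw [hldiff] at *
      nlinarith

lemma hb_final {K M : ℝ} (hK : 1 ≤ K) (hKM : K ≤ M) :
    hb (M / K) M ≤ M / K * (1 + Real.log K) := by
  have hK0 : 0 < K := lt_of_lt_of_le one_pos hK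
  have hM0 : 0 < M := lt_of_lt_of_le (lt_of_lt_of_le one_pos hK) hKM
  have hq : M / (M / K) = K := by field_simp
  unfold hb
  split_ifs with h
  · -- M ≤ M / K forces K ≤ 1, hence K = 1
    have hK1 : K = 1 := by
      have : M * K ≤ M := by
        have := mul_le_mul_of_nonneg_right h hK0.le
        rwa [div_mul_cancel₀ _ hK0.ne'] at this
      nlinarith
    rw [hK1]
    simp
  · rw [hq]
    ring_nf
    exact le_refl _

lemma count_supersets {n k w : ℕ} (hwk : w ≤ k) {W : Finset (Fin n)}
    (hW : W.card = w) :
    ((powersetCard k (univ : Finset (Fin n))).filter (fun A => W ⊆ A)).card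
      = (n - w).choose (k - w) := by
  have hcompl : ((univ : Finset (Fin n)) \ W).card = n - w := by
    rw [card_sdiff_of_subset (subset_univ W), card_univ, Fintype.card_fin, hW]
  rw [← hcompl, ← card_powersetCard (k - w) ((univ : Finset (Fin n)) \ W)]
  apply Finset.card_bij (fun A _ => A \ W)
  · intro A hA
    simp only [mem_filter, Finset.mem_powersetCard] at hA
    obtain ⟨⟨hAu, hAc⟩, hWA⟩ := hA
    rw [Finset.mem_powersetCard]
    exact ⟨sdiff_subset_sdiff hAu (Finset.Subset.refl W),
      by rw [card_sdiff_of_subset hWA, hAc, hW]⟩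
  · intro A1 h1 A2 h2 heq
    simp only [mem_filter] at h1 h2
    have e1 : A1 = A1 \ W ∪ W := (Finset.sdiff_union_of_subset h1.2).symm
    have e2 : A2 = A2 \ W ∪ W := (Finset.sdiff_union_of_subset h2.2).symm
    rw [e1, e2, heq]
  · intro B hB
    rw [Finset.mem_powersetCard] at hB
    obtain ⟨hBs, hBc⟩ := hB
    have hdisj : Disjoint B W := by
      intro x hx1 hx2 y hy
      have := hx1 hy
      have h' := hx2 hy
      have := hBs this
      simp only [Finset.mem_sdiff] at this
      exact absurd h' this.2
    refine ⟨B ∪ W, ?_, ?_⟩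
    · simp only [mem_filter, Finset.mem_powersetCard]
      refine ⟨⟨subset_univ _, ?_⟩, subset_union_right⟩
      rw [card_union_of_disjoint hdisj, hBc, hW, Nat.sub_add_cancel hwk]
    · rw [Finset.union_sdiff_right, Finset.sdiff_eq_self_of_disjoint hdisj]

lemma exists_good_block (n s w : ℕ) (hws : w ≤ n - s)
    (U : Finset (Finset (Fin n))) (hU : ∀ W ∈ U, W.card = w) :
    ∃ A : Finset (Fin n), A.card = n - s ∧
      U.card * (n - s).choose w
        ≤ (U.filter (fun W => W ⊆ A)).card * n.choose w := by
  set k := n - s with hk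
  have hkn : k ≤ n := Nat.sub_le n s
  set 𝓑 := powersetCard k (univ : Finset (Fin n)) with h𝓑
  have h𝓑ne : 𝓑.Nonempty := by
    rw [h𝓑, powersetCard_nonempty, card_univ, Fintype.card_fin]
    exact hkn
  have h𝓑card : 𝓑.card = n.choose k := by
    rw [h𝓑, card_powersetCard, card_univ, Fintype.card_fin]
  set r := (n - w).choose (k - w) with hr
  have hrpos : 0 < r := Nat.choose_pos (Nat.sub_le_sub_right hkn w)
  -- double counting
  have hdc : ∑ A ∈ 𝓑, (U.filter (fun W => W ⊆ A)).card = U.card * r := by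
    have : ∀ A, (U.filter (fun W => W ⊆ A)).card
        = ∑ W ∈ U, if W ⊆ A then 1 else 0 := fun A => Finset.card_filter _ _
    simp_rw [this]
    rw [Finset.sum_comm]
    have : ∀ W ∈ U, (∑ A ∈ 𝓑, if W ⊆ A then 1 else 0) = r := by
      intro W hW
      rw [← Finset.card_filter]
      exact count_supersets hws (hU W hW)
    rw [Finset.sum_congr rfl this, Finset.sum_const, smul_eq_mul]
  -- averaging
  have havg : ∃ A ∈ 𝓑, U.card * r ≤ 𝓑.card * (U.filter (fun W => W ⊆ A)).card := by
    apply Finset.exists_le_of_sum_le h𝓑ne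
    rw [Finset.sum_const, smul_eq_mul, ← Finset.mul_sum, hdc]
  obtain ⟨A, hA𝓑, hAavg⟩ := havg
  have hAcard : A.card = k := (Finset.mem_powersetCard.1 hA𝓑).2
  refine ⟨A, hAcard, ?_⟩
  -- use the identity  C(n,k) C(k,w) = C(n,w) C(n-w,k-w)
  have hid : n.choose k * k.choose w = n.choose w * r :=
    Nat.choose_mul hws
  have h2 : U.card * r * k.choose w
      ≤ (U.filter (fun W => W ⊆ A)).card * n.choose w * r := by
    calc U.card * r * k.choose w
        ≤ 𝓑.card * (U.filter (fun W => W ⊆ A)).card * k.choose w :=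
          Nat.mul_le_mul_right _ hAavg
      _ = (U.filter (fun W => W ⊆ A)).card * (n.choose k * k.choose w) := by
          rw [h𝓑card]; ring
      _ = (U.filter (fun W => W ⊆ A)).card * n.choose w * r := by
          rw [hid]; ring
  have h3 : U.card * k.choose w * r
      ≤ (U.filter (fun W => W ⊆ A)).card * n.choose w * r := by
    calc U.card * k.choose w * r = U.card * r * k.choose w := by ring
      _ ≤ _ := h2
  exact Nat.le_of_mul_le_mul_right h3 hrpos

lemma greedy (n s w : ℕ) (hw : 0 < w) (hws : w ≤ n - s)
    (hKM : (n - s).choose w < n.choose w) :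
    ∀ u : ℕ, ∀ U : Finset (Finset (Fin n)), (∀ W ∈ U, W.card = w) → U.card = u →
    ∃ 𝓕 : Finset (Finset (Fin n)), (∀ A ∈ 𝓕, A.card = n - s) ∧
      (∀ W ∈ U, ∃ A ∈ 𝓕, W ⊆ A) ∧
      (𝓕.card : ℝ) ≤ hb ((n.choose w : ℝ) / ((n - s).choose w : ℝ)) u := by
  have hKpos : 0 < (n - s).choose w := Nat.choose_pos hws
  have hMpos : 0 < n.choose w := lt_trans hKpos hKM
  set K : ℝ := ((n - s).choose w : ℝ) with hKdef
  set M : ℝ := (n.choose w : ℝ) with hMdef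
  have hK0 : (0:ℝ) < K := by rw [hKdef]; exact_mod_cast hKpos
  have hM0 : (0:ℝ) < M := by rw [hMdef]; exact_mod_cast hMpos
  have hKM' : K < M := by rw [hKdef, hMdef]; exact_mod_cast hKM
  set q : ℝ := M / K with hqdef
  have hq1 : 1 < q := (one_lt_div hK0).2 hKM'
  have hq0 : 0 < q := lt_trans one_pos hq1
  intro u
  induction u using Nat.strong_induction_on with
  | _ u ih =>
    intro U hU hcard
    rcases U.eq_empty_or_nonempty with rfl | hne
    · refine ⟨∅, by simp, by simp, ?_⟩
      simp only [Finset.card_empty, Nat.cast_zero]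
      rw [Finset.card_empty] at hcard
      rw [← hcard, hb]
      norm_num [hq0.le]
    · obtain ⟨A, hAcard, havg⟩ := exists_good_block n s w hws U hU
      set C := U.filter (fun W => W ⊆ A) with hC
      set U' := U.filter (fun W => ¬ W ⊆ A) with hU'
      have hsplit : C.card + U'.card = u := by
        rw [hC, hU', Finset.card_filter_add_card_filter_not, hcard]
      have hupos : 0 < u := by
        rw [← hcard]; exact Finset.card_pos.2 hne
      have hKpos' : 0 < (n - s).choose w := hKpos
      have hC1 : 1 ≤ C.card := by
        rcases Nat.eq_zero_or_pos C.card with h0 | hpos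
        · exfalso
          rw [hcard, h0] at havg
          have hz : u * (n - s).choose w = 0 := by omega
          rcases Nat.mul_eq_zero.1 hz with h' | h' <;> omega
        · exact hpos
      have hlt : U'.card < u := by omega
      obtain ⟨𝓕', hF1, hF2, hF3⟩ := ih U'.card hlt U'
        (fun W hW => hU W (Finset.mem_of_mem_filter W hW)) rfl
      refine ⟨insert A 𝓕', ?_, ?_, ?_⟩
      · intro B hB
        rcases Finset.mem_insert.1 hB with rfl | hB'
        · exact hAcard
        · exact hF1 B hB'
      · intro W hW
        by_cases hWA : W ⊆ A
        · exact ⟨A, Finset.mem_insert_self _ _, hWA⟩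
        · obtain ⟨B, hB, hWB⟩ := hF2 W (Finset.mem_filter.2 ⟨hW, hWA⟩)
          exact ⟨B, Finset.mem_insert_of_mem hB, hWB⟩
      · have hcardle : ((insert A 𝓕').card : ℝ) ≤ 𝓕'.card + 1 := by
          exact_mod_cast Finset.card_insert_le A 𝓕'
        have hkey : 1 + hb q (U'.card : ℝ) ≤ hb q u := by
          apply hb_key hq1
          · exact_mod_cast hupos
          · positivity
          · have : U'.card + 1 ≤ u := by omega
            have h' : ((U'.card : ℝ) + 1) ≤ u := by exact_mod_cast this
            linarith
          · -- (U'.card : ℝ) ≤ u * (1 - 1/q)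
            have havg' : (u : ℝ) * K ≤ (C.card : ℝ) * M := by
              rw [hcard] at havg
              rw [hKdef, hMdef]
              exact_mod_cast havg
            have hCu : (U'.card : ℝ) = u - C.card := by
              have : (C.card : ℝ) + U'.card = u := by exact_mod_cast hsplit
              linarith
            have hq_inv : 1 - 1 / q = 1 - K / M := by
              rw [hqdef, one_div_div]
            rw [hCu, hq_inv]
            have : (u : ℝ) * K / M ≤ C.card := by
              rw [div_le_iff₀ hM0]; linarith
            have hexp : (u:ℝ) * (1 - K / M) = u - u * K / M := by
              field_simp
            rw [hexp]
            linarith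
        calc ((insert A 𝓕').card : ℝ) ≤ 𝓕'.card + 1 := hcardle
          _ ≤ hb q U'.card + 1 := by linarith
          _ ≤ hb q u := by linarith

end CoveringGreedy

/-- Greedy covering upper bound: there exists a family `𝓕` of `(n-s)`-element
subsets of an `n`-element set covering every `w`-element subset, with
`|𝓕| ≤ (C(n,w)/C(n-s,w)) · (1 + ln C(n-s,w))`. -/
theorem covering_family_card_upper_bound
    (n s w : ℕ) (hw : 0 < w) (hws : w ≤ n - s) (hs : 1 ≤ s) :
    ∃ 𝓕 : Finset (Finset (Fin n)),
      (∀ A ∈ 𝓕, A.card = n - s) ∧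
      (∀ W : Finset (Fin n), W.card = w → ∃ A ∈ 𝓕, W ⊆ A) ∧
      (𝓕.card : ℝ) ≤
        ((n.choose w : ℝ) / ((n - s).choose w : ℝ)) *
          (1 + Real.log ((n - s).choose w : ℝ)) := by
  classical
  have hn1 : 1 ≤ n := by omega
  have hwn1 : w ≤ n - 1 := by omega
  -- strict monotonicity: C(n-s, w) < C(n, w)
  have hKM : (n - s).choose w < n.choose w := by
    obtain ⟨m, rfl⟩ : ∃ m, n = m + 1 := ⟨n - 1, by omega⟩
    obtain ⟨v, rfl⟩ : ∃ v, w = v + 1 := ⟨w - 1, by omega⟩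
    have h1 : (m + 1 - s).choose (v + 1) ≤ m.choose (v + 1) :=
      Nat.choose_le_choose _ (by omega)
    have h2 : 0 < m.choose v := Nat.choose_pos (by omega)
    rw [Nat.choose_succ_succ]
    have h3 : m.choose v.succ = m.choose (v + 1) := rfl
    omega
  obtain ⟨𝓕, h1, h2, h3⟩ := CoveringGreedy.greedy n s w hw hws hKM
    ((Finset.powersetCard w (univ : Finset (Fin n))).card)
    (Finset.powersetCard w (univ : Finset (Fin n)))
    (fun W hW => (Finset.mem_powersetCard.1 hW).2) rfl
  refine ⟨𝓕, h1, ?_, ?_⟩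
  · intro W hWc
    exact h2 W (Finset.mem_powersetCard.2 ⟨Finset.subset_univ W, hWc⟩)
  · have hKpos : 0 < (n - s).choose w := Nat.choose_pos hws
    have hcardU : (Finset.powersetCard w (univ : Finset (Fin n))).card
        = n.choose w := by
      rw [Finset.card_powersetCard, Finset.card_univ, Fintype.card_fin]
    rw [hcardU] at h3
    refine le_trans h3 ?_
    exact CoveringGreedy.hb_final (by exact_mod_cast hKpos)
      (by exact_mod_cast hKM.le)
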